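/- A point I on the nondegenerate isogonal cubic 𝒞 of quadrilateral ABCD is a singular point of 𝒞 if and only if I is its own isogonal conjugate in ABCD. -/

import Mathlib

open Complex ComplexConjugate

/-- `p` and `q` are isogonal conjugates in the quadrilateral `v₁v₂v₃v₄`. -/
def IsogConjIn (v₁ v₂ v₃ v₄ p q : ℂ) : Prop :=
  ((p - v₁) * (q - v₁) * conj ((v₂ - v₁) * (v₄ - v₁))).im = 0 ∧
  ((p - v₂) * (q - v₂) * conj ((v₁ - v₂) * (v₃ - v₂))).im = 0 ∧
  ((p - v₃) * (q - v₃) * conj ((v₂ - v₃) * (v₄ - v₃))).im = 0 ∧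
  ((p - v₄) * (q - v₄) * conj ((v₃ - v₄) * (v₁ - v₄))).im = 0

set_option maxHeartbeats 1000000

private lemma conj_ne_zero {w : ℂ} (h : w ≠ 0) : conj w ≠ 0 :=
  fun hc => h (by simpa using congrArg (starRingEnd ℂ) hc)

private lemma eq_zero_of_conj_eq_zero {w : ℂ} (h : conj w = 0) : w = 0 := by
  simpa using congrArg (starRingEnd ℂ) h

private lemma exists_real_smul (p w : ℂ) (hp : p ≠ 0) (h : conj p * w = p * conj w) :
    ∃ r : ℝ, w = r • p := by
  refine ⟨(w * conj p).re / Complex.normSq p, ?_⟩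
  have hre : ((w * conj p).re : ℂ) = w * conj p := by
    rw [← Complex.conj_eq_iff_re, map_mul, Complex.conj_conj]
    linear_combination -h
  have hns : (Complex.normSq p : ℂ) ≠ 0 := by
    simpa [Complex.normSq_eq_zero] using hp
  have hpc : p * conj p = (Complex.normSq p : ℂ) := Complex.mul_conj p
  rw [Complex.real_smul, Complex.ofReal_div, div_mul_eq_mul_div, eq_div_iff hns, ← hpc]
  linear_combination (-p) * hre

private lemma col4 (z p w₁ w₂ w₃ w₄ : ℂ) (hp : p ≠ 0)
    (h₁ : conj p * w₁ = p * conj w₁) (h₂ : conj p * w₂ = p * conj w₂)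
    (h₃ : conj p * w₃ = p * conj w₃) (h₄ : conj p * w₄ = p * conj w₄) :
    Collinear ℝ ({z + w₁, z + w₂, z + w₃, z + w₄} : Set ℂ) := by
  rw [collinear_iff_exists_forall_eq_smul_vadd]
  refine ⟨z, p, ?_⟩
  have key : ∀ w : ℂ, conj p * w = p * conj w → ∃ r : ℝ, z + w = r • p +ᵥ z := by
    intro w hw
    obtain ⟨r, hr⟩ := exists_real_smul p w hp hw
    exact ⟨r, by rw [hr]; simp [add_comm]⟩
  rintro x hx
  simp only [Set.mem_insert_iff, Set.mem_singleton_iff] at hx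
  rcases hx with rfl | rfl | rfl | rfl
  exacts [key _ h₁, key _ h₂, key _ h₃, key _ h₄]

private lemma vertPoly (X X' Y Y' P P' Q Q' : ℂ) (hY' : Y' ≠ 0) (hs : X + Y ≠ 0)
    (e1 : X' * Y' * (P * Q) = X * Y * (P' * Q'))
    (e2 : (X + Y) * (P' * Q') = X' * Y' * (P + Q))
    (e3 : (X' + Y') * (P + Q) = (X + Y) * (P' + Q')) :
    X' * X' * ((P - X) * (Q - X)) = X * X * ((P' - X') * (Q' - X')) := by
  have key : ((X + Y) * Y') * (X' * X' * ((P - X) * (Q - X)))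
      = ((X + Y) * Y') * (X * X * ((P' - X') * (Q' - X'))) := by
    linear_combination (X' * (X + Y)) * e1 + (X * (X' * Y - X * Y')) * e2
      - (X * X * X' * Y') * e3
  exact mul_left_cancel₀ (mul_ne_zero hs hY') key

private lemma mainPoly (X X' Y Y' P P' Q Q' : ℂ)
    (hX : X ≠ 0) (hY : Y ≠ 0) (hX' : X' ≠ 0) (hY' : Y' ≠ 0)
    (hD : X' * Y ≠ X * Y')
    (hi : X * Y * (P' * Q') = X' * Y' * (P * Q))
    (Qa : X' * X' * ((P - X) * (Q - X)) = X * X * ((P' - X') * (Q' - X')))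
    (Qc : Y' * Y' * ((P - Y) * (Q - Y)) = Y * Y * ((P' - Y') * (Q' - Y'))) :
    (X + Y) * (P' * Q') = X' * Y' * (P + Q) := by
  have Ra : P * Q * (X' * Y - X * Y') = X * Y * (X' * (P + Q) - X * (P' + Q')) := by
    refine mul_left_cancel₀ hX' ?_
    linear_combination Y * Qa + X * hi
  have Rc : -(P * Q * (X' * Y - X * Y')) = X * Y * (Y' * (P + Q) - Y * (P' + Q')) := by
    refine mul_left_cancel₀ hY' ?_
    linear_combination X * Qc + Y * hi
  have K : (X' + Y') * (P + Q) = (X + Y) * (P' + Q') := by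
    refine mul_left_cancel₀ (mul_ne_zero hX hY) ?_
    linear_combination -Ra - Rc
  have hSV : (X + Y) * (P * Q) = X * Y * (P + Q) := by
    refine mul_right_cancel₀ (sub_ne_zero_of_ne hD) ?_
    linear_combination (X + Y) * Ra + X * X * Y * K
  refine mul_left_cancel₀ (mul_ne_zero hX hY) ?_
  linear_combination (X + Y) * hi + X' * Y' * hSV

private lemma imzero_of_conj (A B : ℂ) (h : A = conj B) (w : ℂ) :
    (A * w + B * conj w).im = 0 := by
  subst h
  have : conj B * w + B * conj w = B * conj w + conj (B * conj w) := by
    rw [map_mul, Complex.conj_conj]; ring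
  rw [this, Complex.add_conj]
  simp

private lemma conj_of_imzero (A B : ℂ) (h : ∀ w : ℂ, (A * w + B * conj w).im = 0) :
    A = conj B := by
  have e1 := h 1
  have e2 := h Complex.I
  simp only [map_one, mul_one, Complex.add_im] at e1
  simp only [Complex.conj_I, mul_neg, Complex.add_im, Complex.neg_im, Complex.mul_I_im] at e2
  apply Complex.ext
  · simp only [Complex.conj_re]; linarith
  · simp only [Complex.conj_im]; linarith

private lemma key (i₀ x y p q : ℂ)
    (hxp : x ≠ p) (hxy : x ≠ y) (hxq : x ≠ q)
    (hpy : p ≠ y) (hpq : p ≠ q) (hyq : y ≠ q)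
    (hnp : x + y ≠ p + q)
    (hncol : ¬ Collinear ℝ ({i₀ + x, i₀ + p, i₀ + y, i₀ + q} : Set ℂ))
    (hi : (x * y * conj (p * q)).im = 0) :
    (x + y) * conj (p * q) = conj (x * y) * (p + q)
      ↔ ((x * x * conj ((p - x) * (q - x))).im = 0
        ∧ (p * p * conj ((x - p) * (y - p))).im = 0
        ∧ (y * y * conj ((p - y) * (q - y))).im = 0
        ∧ (q * q * conj ((y - q) * (x - q))).im = 0) := by
  have hic : conj x * conj y * (p * q) = x * y * (conj p * conj q) := by
    have h := Complex.conj_eq_iff_im.mpr hi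
    simp only [map_mul, Complex.conj_conj] at h
    linear_combination h
  constructor
  · intro hS
    have hSx : (x + y) * (conj p * conj q) = conj x * conj y * (p + q) := by
      have h := hS
      simp only [map_mul] at h
      linear_combination h
    -- nonvanishing
    have hx0 : x ≠ 0 := by
      intro h0
      have h0' : conj x = 0 := by rw [h0]; exact map_zero _
      have h1 : y * (conj p * conj q) = 0 := by
        linear_combination hSx + (-(conj p * conj q)) * h0 + (conj y * (p + q)) * h0'
      rcases mul_eq_zero.mp h1 with h2 | h2
      · exact hxy (h0.trans h2.symm)
      rcases mul_eq_zero.mp h2 with h3 | h3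
      · exact hxp (h0.trans (eq_zero_of_conj_eq_zero h3).symm)
      · exact hxq (h0.trans (eq_zero_of_conj_eq_zero h3).symm)
    have hy0 : y ≠ 0 := by
      intro h0
      have h0' : conj y = 0 := by rw [h0]; exact map_zero _
      have h1 : x * (conj p * conj q) = 0 := by
        linear_combination hSx + (-(conj p * conj q)) * h0 + (conj x * (p + q)) * h0'
      rcases mul_eq_zero.mp h1 with h2 | h2
      · exact hxy (h2.trans h0.symm)
      rcases mul_eq_zero.mp h2 with h3 | h3
      · exact hpy ((eq_zero_of_conj_eq_zero h3).trans h0.symm)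
      · exact hyq (h0.trans (eq_zero_of_conj_eq_zero h3).symm)
    have hp0 : p ≠ 0 := by
      intro h0
      have h0' : conj p = 0 := by rw [h0]; exact map_zero _
      have h1 : conj x * conj y * q = 0 := by
        linear_combination -hSx + (-(conj x * conj y)) * h0 + ((x + y) * conj q) * h0'
      rcases mul_eq_zero.mp h1 with h2 | h2
      · rcases mul_eq_zero.mp h2 with h3 | h3
        · exact hxp ((eq_zero_of_conj_eq_zero h3).trans h0.symm)
        · exact hpy (((eq_zero_of_conj_eq_zero h3).trans h0.symm).symm)
      · exact hpq (h0.trans h2.symm)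
    have hq0 : q ≠ 0 := by
      intro h0
      have h0' : conj q = 0 := by rw [h0]; exact map_zero _
      have h1 : conj x * conj y * p = 0 := by
        linear_combination -hSx + (-(conj x * conj y)) * h0 + ((x + y) * conj p) * h0'
      rcases mul_eq_zero.mp h1 with h2 | h2
      · rcases mul_eq_zero.mp h2 with h3 | h3
        · exact hxq ((eq_zero_of_conj_eq_zero h3).trans h0.symm)
        · exact hyq ((eq_zero_of_conj_eq_zero h3).trans h0.symm)
      · exact hpq (h2.trans h0.symm)
    have hx' : conj x ≠ 0 := conj_ne_zero hx0
    have hy' : conj y ≠ 0 := conj_ne_zero hy0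
    have hp' : conj p ≠ 0 := conj_ne_zero hp0
    have hq' : conj q ≠ 0 := conj_ne_zero hq0
    have hs : x + y ≠ 0 := by
      intro h0
      have h1 : conj x * conj y * (p + q) = 0 := by rw [← hSx, h0, zero_mul]
      rcases mul_eq_zero.mp h1 with h2 | h2
      · exact (mul_ne_zero hx' hy') h2
      · exact hnp (h0.trans h2.symm)
    have ht : p + q ≠ 0 := by
      intro h0
      have h1 : (x + y) * (conj p * conj q) = 0 := by rw [hSx, h0, mul_zero]
      rcases mul_eq_zero.mp h1 with h2 | h2
      · exact hs h2
      · exact (mul_ne_zero hp' hq') h2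
    have hSv : (x + y) * (p * q) = x * y * (p + q) := by
      refine mul_left_cancel₀ (mul_ne_zero hp' hq') ?_
      linear_combination (p * q) * hSx + (p + q) * hic
    have hSc : (conj x + conj y) * (p * q) = x * y * (conj p + conj q) := by
      have h := congrArg (starRingEnd ℂ) hSx
      simp only [map_mul, map_add, Complex.conj_conj] at h
      linear_combination h
    have e3 : (conj x + conj y) * (p + q) = (x + y) * (conj p + conj q) := by
      refine mul_left_cancel₀ (mul_ne_zero hx0 hy0) ?_
      linear_combination (-(conj x + conj y)) * hSv + (x + y) * hSc
    have Va := vertPoly x (conj x) y (conj y) p (conj p) q (conj q) hy' hs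
      (by linear_combination hic) hSx e3
    have Vc := vertPoly y (conj y) x (conj x) p (conj p) q (conj q) hx'
      (by rw [add_comm]; exact hs)
      (by linear_combination hic) (by linear_combination hSx) (by linear_combination e3)
    have Vb := vertPoly p (conj p) q (conj q) x (conj x) y (conj y) hq' ht
      (by linear_combination -hic) (by linear_combination -hSx) (by linear_combination -e3)
    have Vd := vertPoly q (conj q) p (conj p) x (conj x) y (conj y) hp'
      (by rw [add_comm]; exact ht)
      (by linear_combination -hic) (by linear_combination -hSx) (by linear_combination -e3)
    refine ⟨?_, ?_, ?_, ?_⟩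
    · rw [← Complex.conj_eq_iff_im]
      simp only [map_mul, map_sub, Complex.conj_conj]
      linear_combination Va
    · rw [← Complex.conj_eq_iff_im]
      simp only [map_mul, map_sub, Complex.conj_conj]
      linear_combination Vb
    · rw [← Complex.conj_eq_iff_im]
      simp only [map_mul, map_sub, Complex.conj_conj]
      linear_combination Vc
    · rw [← Complex.conj_eq_iff_im]
      simp only [map_mul, map_sub, Complex.conj_conj]
      linear_combination Vd
  · rintro ⟨q1, q2, q3, q4⟩
    have Qa : conj x * conj x * ((p - x) * (q - x))
        = x * x * ((conj p - conj x) * (conj q - conj x)) := by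
      have h := Complex.conj_eq_iff_im.mpr q1
      simp only [map_mul, map_sub, Complex.conj_conj] at h
      linear_combination h
    have Qb : conj p * conj p * ((x - p) * (y - p))
        = p * p * ((conj x - conj p) * (conj y - conj p)) := by
      have h := Complex.conj_eq_iff_im.mpr q2
      simp only [map_mul, map_sub, Complex.conj_conj] at h
      linear_combination h
    have Qc : conj y * conj y * ((p - y) * (q - y))
        = y * y * ((conj p - conj y) * (conj q - conj y)) := by
      have h := Complex.conj_eq_iff_im.mpr q3
      simp only [map_mul, map_sub, Complex.conj_conj] at h
      linear_combination h
    have Qd : conj q * conj q * ((x - q) * (y - q))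
        = q * q * ((conj x - conj q) * (conj y - conj q)) := by
      have h := Complex.conj_eq_iff_im.mpr q4
      simp only [map_mul, map_sub, Complex.conj_conj] at h
      linear_combination h
    -- vertex coincidence cases
    by_cases hx0 : x = 0
    · exfalso
      have hx0' : conj x = 0 := by rw [hx0]; exact map_zero _
      have hy0 : y ≠ 0 := fun h => hxy (hx0.trans h.symm)
      have hp0 : p ≠ 0 := fun h => hxp (hx0.trans h.symm)
      have hq0 : q ≠ 0 := fun h => hxq (hx0.trans h.symm)
      have hby : conj p * y = p * conj y := by
        refine mul_left_cancel₀ (mul_ne_zero hp0 (conj_ne_zero hp0)) ?_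
        linear_combination -Qb + (conj p * conj p * (y - p)) * hx0
          + (p * p * (conj p - conj y)) * hx0'
      have hdy : conj q * y = q * conj y := by
        refine mul_left_cancel₀ (mul_ne_zero hq0 (conj_ne_zero hq0)) ?_
        linear_combination -Qd + (conj q * conj q * (y - q)) * hx0
          + (q * q * (conj q - conj y)) * hx0'
      refine hncol (col4 i₀ y x p y q hy0 ?_ ?_ (by ring) ?_)
      · rw [hx0]; simp
      · linear_combination -hby
      · linear_combination -hdy
    by_cases hy0 : y = 0
    · exfalso
      have hy0' : conj y = 0 := by rw [hy0]; exact map_zero _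
      have hxx : x ≠ 0 := hx0
      have hp0 : p ≠ 0 := fun h => hpy (h.trans hy0.symm)
      have hq0 : q ≠ 0 := fun h => hyq (hy0.trans h.symm)
      have hbx : conj p * x = p * conj x := by
        refine mul_left_cancel₀ (mul_ne_zero hp0 (conj_ne_zero hp0)) ?_
        linear_combination -Qb + (conj p * conj p * (x - p)) * hy0
          + (p * p * (conj p - conj x)) * hy0'
      have hdx : conj q * x = q * conj x := by
        refine mul_left_cancel₀ (mul_ne_zero hq0 (conj_ne_zero hq0)) ?_
        linear_combination -Qd + (conj q * conj q * (x - q)) * hy0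
          + (q * q * (conj q - conj x)) * hy0'
      refine hncol (col4 i₀ x x p y q hxx (by ring) ?_ ?_ ?_)
      · linear_combination -hbx
      · rw [hy0]; simp
      · linear_combination -hdx
    by_cases hp0 : p = 0
    · exfalso
      have hp0' : conj p = 0 := by rw [hp0]; exact map_zero _
      have hq0 : q ≠ 0 := fun h => hpq (hp0.trans h.symm)
      have hxq' : conj x * q = x * conj q := by
        refine mul_left_cancel₀ (mul_ne_zero hx0 (conj_ne_zero hx0)) ?_
        linear_combination -Qa + (conj x * conj x * (q - x)) * hp0
          + (x * x * (conj x - conj q)) * hp0'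
      have hyq' : conj y * q = y * conj q := by
        refine mul_left_cancel₀ (mul_ne_zero hy0 (conj_ne_zero hy0)) ?_
        linear_combination -Qc + (conj y * conj y * (q - y)) * hp0
          + (y * y * (conj y - conj q)) * hp0'
      refine hncol (col4 i₀ q x p y q hq0 ?_ ?_ ?_ (by ring))
      · linear_combination -hxq'
      · rw [hp0]; simp
      · linear_combination -hyq'
    by_cases hq0 : q = 0
    · exfalso
      have hq0' : conj q = 0 := by rw [hq0]; exact map_zero _
      have hxp' : conj x * p = x * conj p := by
        refine mul_left_cancel₀ (mul_ne_zero hx0 (conj_ne_zero hx0)) ?_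
        linear_combination -Qa + (conj x * conj x * (p - x)) * hq0
          + (x * x * (conj x - conj p)) * hq0'
      have hyp' : conj y * p = y * conj p := by
        refine mul_left_cancel₀ (mul_ne_zero hy0 (conj_ne_zero hy0)) ?_
        linear_combination -Qc + (conj y * conj y * (p - y)) * hq0
          + (y * y * (conj y - conj p)) * hq0'
      refine hncol (col4 i₀ p x p y q hp0 ?_ (by ring) ?_ ?_)
      · linear_combination -hxp'
      · linear_combination -hyp'
      · rw [hq0]; simp
    -- all differences nonzero
    have hx' : conj x ≠ 0 := conj_ne_zero hx0
    have hy' : conj y ≠ 0 := conj_ne_zero hy0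
    have hp' : conj p ≠ 0 := conj_ne_zero hp0
    have hq' : conj q ≠ 0 := conj_ne_zero hq0
    by_cases hD : conj x * y = x * conj y
    · by_cases hD2 : conj p * q = p * conj q
      · -- both diagonals: derive contradiction
        exfalso
        have split : (x * conj p - conj x * p) * ((x * conj p + conj x * p) * (y * q)) = 0 := by
          linear_combination (x * x * conj p * y) * hD2
            + (x * p) * (hic.symm) - (conj x * p * p * q) * hD
        rcases mul_eq_zero.mp split with h1 | h1
        · -- collinear case
          have hEp : x * conj p = conj x * p := by linear_combination h1
          have hq2 : conj x * q = x * conj q := by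
            refine mul_left_cancel₀ hp0 ?_
            linear_combination q * (-hEp) + x * hD2
          refine hncol (col4 i₀ x x p y q hx0 (by ring) ?_ hD hq2)
          · linear_combination -hEp
        · -- perpendicular case
          have hE : x * conj p + conj x * p = 0 := by
            rcases mul_eq_zero.mp h1 with h2 | h2
            · exact h2
            · rcases mul_eq_zero.mp h2 with h3 | h3
              · exact absurd h3 hy0
              · exact absurd h3 hq0
          have hE2 : x * conj q + conj x * q = 0 := by
            refine mul_left_cancel₀ hp0 ?_
            rw [mul_zero]
            linear_combination (-x) * hD2 + q * hE
          have hE3 : p * conj y + conj p * y = 0 := by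
            refine mul_left_cancel₀ hx0 ?_
            rw [mul_zero]
            linear_combination (-p) * hD + y * hE
          have hT : p + q = 0 := by
            refine mul_left_cancel₀ (show (2 : ℂ) * x * conj x * conj x ≠ 0 from
              mul_ne_zero (mul_ne_zero (mul_ne_zero two_ne_zero hx0) hx') hx') ?_
            rw [mul_zero]
            linear_combination -Qa + (-(x * conj q) + x * conj x) * hE
              + (conj x * p + x * conj x) * hE2
          have hS : x + y = 0 := by
            refine mul_left_cancel₀ (show (2 : ℂ) * p * conj p * conj p ≠ 0 from
              mul_ne_zero (mul_ne_zero (mul_ne_zero two_ne_zero hp0) hp') hp') ?_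
            rw [mul_zero]
            linear_combination -Qb + (-(p * conj y) + p * conj p) * hE
              + (conj p * x + p * conj p) * hE3
          exact hnp (hS.trans hT.symm)
      · -- use mainPoly with roles swapped
        have hmain := mainPoly p (conj p) q (conj q) x (conj x) y (conj y)
          hp0 hq0 hp' hq' hD2 (by linear_combination hic) Qb Qd
        simp only [map_mul]
        linear_combination -hmain
    · have hmain := mainPoly x (conj x) y (conj y) p (conj p) q (conj q)
        hx0 hy0 hx' hy' hD (by linear_combination -hic) Qa Qc
      simp only [map_mul]
      linear_combination hmain


/-- the isogonal cubic of a nondegenerate quadrilateral `abcd` is the zero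
set of the real polynomial function `z ↦ Im((a-z)(c-z) · conj((b-z)(d-z)))`.  A point `i₀`
of the cubic is a singular point (the full real derivative of the defining function
vanishes there) if and only if `i₀` is its own isogonal conjugate in `abcd`. -/
theorem singular_iff_self_conjugate (a b c d i₀ : ℂ)
    (hab : a ≠ b) (hac : a ≠ c) (had : a ≠ d) (hbc : b ≠ c) (hbd : b ≠ d) (hcd : c ≠ d)
    (hnp : a + c ≠ b + d) (hncol : ¬ Collinear ℝ ({a, b, c, d} : Set ℂ))
    (hi : ((a - i₀) * (c - i₀) * conj ((b - i₀) * (d - i₀))).im = 0) :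
    fderiv ℝ (fun z : ℂ => ((a - z) * (c - z) * conj ((b - z) * (d - z))).im) i₀ = 0
      ↔ IsogConjIn a b c d i₀ i₀ := by
  -- Step 1: compute the derivative
  have hder : ∀ w, fderiv ℝ (fun z : ℂ => ((a - z) * (c - z) * conj ((b - z) * (d - z))).im) i₀ w
      = (-((a - i₀) + (c - i₀)) * conj ((b - i₀) * (d - i₀)) * w
         + -((a - i₀) * (c - i₀)) * conj ((b - i₀) + (d - i₀)) * conj w).im := by
    have h1 : HasFDerivAt (fun z : ℂ => a - z) (-(ContinuousLinearMap.id ℝ ℂ)) i₀ :=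
      (hasFDerivAt_id i₀).const_sub a
    have h2 : HasFDerivAt (fun z : ℂ => c - z) (-(ContinuousLinearMap.id ℝ ℂ)) i₀ :=
      (hasFDerivAt_id i₀).const_sub c
    have h3 : HasFDerivAt (fun z : ℂ => conj (b - z))
        (Complex.conjCLE.toContinuousLinearMap.comp (-(ContinuousLinearMap.id ℝ ℂ))) i₀ := by
      have := (Complex.conjCLE.hasFDerivAt (x := b - i₀)).comp i₀ ((hasFDerivAt_id i₀).const_sub b)
      simpa only [Function.comp_def, Complex.conjCLE_apply] using this
    have h4 : HasFDerivAt (fun z : ℂ => conj (d - z))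
        (Complex.conjCLE.toContinuousLinearMap.comp (-(ContinuousLinearMap.id ℝ ℂ))) i₀ := by
      have := (Complex.conjCLE.hasFDerivAt (x := d - i₀)).comp i₀ ((hasFDerivAt_id i₀).const_sub d)
      simpa only [Function.comp_def, Complex.conjCLE_apply] using this
    have hprod := (h1.mul' h2).mul' (h3.mul' h4)
    have H := (Complex.imCLM.hasFDerivAt
      (x := ((a - i₀) * (c - i₀) * (conj (b - i₀) * conj (d - i₀))))).comp i₀ hprod
    have H' : HasFDerivAt (fun z : ℂ => ((a - z) * (c - z) * (conj (b - z) * conj (d - z))).im)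
        (Complex.imCLM.comp
          (((a - i₀) * (c - i₀)) •
              ((conj (b - i₀)) • (Complex.conjCLE.toContinuousLinearMap.comp
                  (-(ContinuousLinearMap.id ℝ ℂ))) +
                (Complex.conjCLE.toContinuousLinearMap.comp
                  (-(ContinuousLinearMap.id ℝ ℂ))).smulRight (conj (d - i₀))) +
            ((a - i₀) • (-(ContinuousLinearMap.id ℝ ℂ)) +
              (-(ContinuousLinearMap.id ℝ ℂ)).smulRight (c - i₀)).smulRight
              (conj (b - i₀) * conj (d - i₀)))) i₀ := by
      refine H.congr_fderiv ?_
      ext w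
      simp [ContinuousLinearMap.smulRight_apply, op_smul_eq_mul, smul_eq_mul]
      ring
    intro w
    have hfun : (fun z : ℂ => ((a - z) * (c - z) * conj ((b - z) * (d - z))).im)
        = (fun z : ℂ => ((a - z) * (c - z) * (conj (b - z) * conj (d - z))).im) := by
      funext z; rw [map_mul]
    rw [hfun, H'.fderiv]
    simp [ContinuousLinearMap.comp_apply, ContinuousLinearMap.add_apply,
      ContinuousLinearMap.smul_apply, ContinuousLinearMap.smulRight_apply,
      ContinuousLinearMap.neg_apply, ContinuousLinearMap.id_apply, Complex.conjCLE_apply,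
      smul_eq_mul, map_mul]
    ring_nf
  -- Step 2: derivative vanishes iff the "S" equation holds
  have hiff : fderiv ℝ (fun z : ℂ => ((a - z) * (c - z) * conj ((b - z) * (d - z))).im) i₀ = 0
      ↔ ((a - i₀) + (c - i₀)) * conj ((b - i₀) * (d - i₀))
          = conj ((a - i₀) * (c - i₀)) * ((b - i₀) + (d - i₀)) := by
    constructor
    · intro h0
      have hAB := conj_of_imzero (-((a - i₀) + (c - i₀)) * conj ((b - i₀) * (d - i₀)))
        (-((a - i₀) * (c - i₀)) * conj ((b - i₀) + (d - i₀)))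
        (fun w => by rw [← hder w, h0]; simp)
      simp only [map_neg, map_mul, map_add, Complex.conj_conj] at hAB
      simp only [map_mul]
      linear_combination -hAB
    · intro hS
      refine ContinuousLinearMap.ext fun w => ?_
      rw [hder w, ContinuousLinearMap.zero_apply]
      refine imzero_of_conj _ _ ?_ w
      simp only [map_neg, map_mul, map_add, Complex.conj_conj]
      have hS' := hS
      simp only [map_mul] at hS'
      linear_combination -hS'
  rw [hiff]
  -- Step 3: use the key algebraic equivalence
  have hkey := key i₀ (a - i₀) (c - i₀) (b - i₀) (d - i₀)
    (fun h => hab (show a = b by linear_combination h))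
    (fun h => hac (show a = c by linear_combination h))
    (fun h => had (show a = d by linear_combination h))
    (fun h => hbc (show b = c by linear_combination h))
    (fun h => hbd (show b = d by linear_combination h))
    (fun h => hcd (show c = d by linear_combination h))
    (fun h => hnp (show a + c = b + d by linear_combination h))
    (fun hcol => hncol (by
      simpa only [show ∀ t : ℂ, i₀ + (t - i₀) = t from fun t => by ring] using hcol))
    hi
  rw [hkey]
  unfold IsogConjIn
  rw [show (i₀ - a) * (i₀ - a) * conj ((b - a) * (d - a))
      = (a - i₀) * (a - i₀) * conj ((b - i₀ - (a - i₀)) * (d - i₀ - (a - i₀))) from by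
    rw [show (b - a) * (d - a) = (b - i₀ - (a - i₀)) * (d - i₀ - (a - i₀)) from by ring]; ring]
  rw [show (i₀ - b) * (i₀ - b) * conj ((a - b) * (c - b))
      = (b - i₀) * (b - i₀) * conj ((a - i₀ - (b - i₀)) * (c - i₀ - (b - i₀))) from by
    rw [show (a - b) * (c - b) = (a - i₀ - (b - i₀)) * (c - i₀ - (b - i₀)) from by ring]; ring]
  rw [show (i₀ - c) * (i₀ - c) * conj ((b - c) * (d - c))
      = (c - i₀) * (c - i₀) * conj ((b - i₀ - (c - i₀)) * (d - i₀ - (c - i₀))) from by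
    rw [show (b - c) * (d - c) = (b - i₀ - (c - i₀)) * (d - i₀ - (c - i₀)) from by ring]; ring]
  rw [show (i₀ - d) * (i₀ - d) * conj ((c - d) * (a - d))
      = (d - i₀) * (d - i₀) * conj ((c - i₀ - (d - i₀)) * (a - i₀ - (d - i₀))) from by
    rw [show (c - d) * (a - d) = (c - i₀ - (d - i₀)) * (a - i₀ - (d - i₀)) from by ring]; ring]
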